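/- Let G be a connected s-quadrangular graph of maximum degree at most 4 that is not hamiltonian, and let C₁ ∪ ⋯ ∪ C_m be a 2-factor of G with minimum number m ≥ 2 of cycles. Then every vertex u that has a neighbor outside its own cycle C_i has degree exactly 4 in G. -/

import Mathlib

/-- The union of all pairwise common neighborhoods of distinct members of `S` in `G`. -/
def commonUnionG {V : Type*} (G : SimpleGraph V) (S : Set V) : Set V :=
  {w | ∃ u ∈ S, ∃ v ∈ S, u ≠ v ∧ G.Adj u w ∧ G.Adj v w}

/-- A graph is s-quadrangular if for every set `S` of at least two vertices in
which every member shares a neighbor with another member, the union of all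
pairwise common neighborhoods has size at least `|S|`. -/
def SQuadG {V : Type*} (G : SimpleGraph V) : Prop :=
  ∀ S : Set V, 2 ≤ S.ncard →
    (∀ u ∈ S, ∃ v ∈ S, v ≠ u ∧ (G.neighborSet u ∩ G.neighborSet v).Nonempty) →
    S.ncard ≤ (commonUnionG G S).ncard

/-- A 2-factor of `G`, encoded as a permutation `σ` that follows edges of `G`
and has all cycles of length at least 3. -/
def IsTwoFactorPerm {V : Type*} (G : SimpleGraph V) (σ : Equiv.Perm V) : Prop :=
  (∀ v, G.Adj v (σ v)) ∧ (∀ v, σ (σ v) ≠ v)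

section Helpers

open Equiv Equiv.Perm

variable {V : Type*} [Fintype V] [DecidableEq V]

lemma tf_fpf {G : SimpleGraph V} {f : Equiv.Perm V} (hf : IsTwoFactorPerm G f) :
    ∀ v, f v ≠ v := by
  intro v h
  have h2 := hf.1 v
  rw [h] at h2
  exact G.loopless.irrefl v h2

lemma sc_apply (f : Equiv.Perm V) (p : V) : f.SameCycle p (f p) := ⟨1, by simp⟩

lemma cycleOf_eq_iff {f : Equiv.Perm V} (hf : ∀ v, f v ≠ v) (p q : V) :
    f.cycleOf p = f.cycleOf q ↔ f.SameCycle p q := by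
  constructor
  · intro h
    have hq : q ∈ (f.cycleOf q).support :=
      Equiv.Perm.mem_support_cycleOf_iff.2 ⟨Equiv.Perm.SameCycle.refl _ _,
        Equiv.Perm.mem_support.2 (hf q)⟩
    rw [← h] at hq
    exact (Equiv.Perm.mem_support_cycleOf_iff.1 hq).1
  · exact fun h => h.cycleOf_eq

lemma card_cycleType_eq {f : Equiv.Perm V} (hf : ∀ v, f v ≠ v) :
    Multiset.card f.cycleType = (Finset.univ.image f.cycleOf).card := by
  have h1 : Multiset.card f.cycleType = f.cycleFactorsFinset.card := by
    rw [Equiv.Perm.cycleType_def, Multiset.card_map]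
    rfl
  rw [h1]
  congr 1
  ext c
  simp only [Finset.mem_image, Finset.mem_univ, true_and]
  constructor
  · intro hc
    obtain ⟨x, hx, -⟩ := (Equiv.Perm.mem_cycleFactorsFinset_iff.1 hc).1
    exact ⟨x, (Equiv.Perm.cycle_is_cycleOf (Equiv.Perm.mem_support.2 hx) hc).symm⟩
  · rintro ⟨x, rfl⟩
    exact Equiv.Perm.cycleOf_mem_cycleFactorsFinset_iff.2 (Equiv.Perm.mem_support.2 (hf x))

lemma card_image_le_of_ker [Nonempty V] {α : Type*} [DecidableEq α]
    (f g : V → α) (h : ∀ p q, f p = f q → g p = g q) :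
    (Finset.univ.image g).card ≤ (Finset.univ.image f).card := by
  classical
  set φ : α → α := fun t => if ht : ∃ p, f p = t then g ht.choose else g (Classical.arbitrary V)
    with hφ
  have key : ∀ p : V, φ (f p) = g p := by
    intro p
    have hex : ∃ q, f q = f p := ⟨p, rfl⟩
    simp only [hφ, dif_pos hex]
    exact h _ _ hex.choose_spec
  have himg : (Finset.univ.image f).image φ = Finset.univ.image g := by
    rw [Finset.image_image]
    exact Finset.image_congr fun p _ => key p
  rw [← himg]
  exact Finset.card_image_le

lemma card_image_lt_of_ker [Nonempty V] {α : Type*} [DecidableEq α]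
    (f g : V → α) (h : ∀ p q, f p = f q → g p = g q)
    {x z : V} (hgxz : g x = g z) (hfxz : f x ≠ f z) :
    (Finset.univ.image g).card < (Finset.univ.image f).card := by
  classical
  set φ : α → α := fun t => if ht : ∃ p, f p = t then g ht.choose else g (Classical.arbitrary V)
    with hφ
  have key : ∀ p : V, φ (f p) = g p := by
    intro p
    have hex : ∃ q, f q = f p := ⟨p, rfl⟩
    simp only [hφ, dif_pos hex]
    exact h _ _ hex.choose_spec
  have himg : (Finset.univ.image f).image φ = Finset.univ.image g := by
    rw [Finset.image_image]
    exact Finset.image_congr fun p _ => key p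
  rw [← himg]
  refine lt_of_le_of_ne Finset.card_image_le fun heq => ?_
  have hinj : Set.InjOn φ (Finset.univ.image f) := Finset.card_image_iff.1 heq
  refine hfxz (hinj (Finset.mem_image_of_mem f (Finset.mem_univ x))
    (Finset.mem_image_of_mem f (Finset.mem_univ z)) ?_)
  rw [key, key]
  exact hgxz

lemma sameCycle_of_steps {f g : Equiv.Perm V} (h : ∀ y, g y = f y ∨ g y = f⁻¹ y) {p q : V}
    (hpq : g.SameCycle p q) : f.SameCycle p q := by
  suffices h' : ∀ n : ℕ, f.SameCycle p ((g ^ n) p) by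
    obtain ⟨n, -, -, hn⟩ := hpq.exists_pow_eq''
    exact hn ▸ h' n
  intro n
  induction n with
  | zero => simpa using Equiv.Perm.SameCycle.refl f p
  | succ k ih =>
    have hstep : (g ^ (k + 1)) p = g ((g ^ k) p) := by
      rw [pow_succ']
      rfl
    rw [hstep]
    rcases h ((g ^ k) p) with hy | hy <;> rw [hy]
    · exact ih.trans ⟨1, by simp⟩
    · exact ih.trans ⟨-1, by simp⟩

lemma merge_lemma {G : SimpleGraph V} {f : Equiv.Perm V} (hf : IsTwoFactorPerm G f)
    {x z : V} (hxz : ¬ f.SameCycle x z) (h1 : G.Adj x (f z)) (h2 : G.Adj z (f x)) :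
    IsTwoFactorPerm G (f * Equiv.swap x z) ∧
      Multiset.card (f * Equiv.swap x z).cycleType < Multiset.card f.cycleType := by
  have hfp : ∀ v, f v ≠ v := tf_fpf hf
  have hne : x ≠ z := fun h => hxz (h ▸ Equiv.Perm.SameCycle.refl f x)
  set g : Equiv.Perm V := f * Equiv.swap x z with hg
  have gx : g x = f z := by simp [hg, Equiv.Perm.mul_apply]
  have gz : g z = f x := by simp [hg, Equiv.Perm.mul_apply]
  have gv : ∀ v, v ≠ x → v ≠ z → g v = f v := by
    intro v hvx hvz
    simp [hg, Equiv.Perm.mul_apply, Equiv.swap_apply_of_ne_of_ne hvx hvz]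
  -- basic same-cycle consequences
  have hfzx : f z ≠ x := by
    intro h
    have h1' : f.SameCycle z (f z) := sc_apply f z
    rw [h] at h1'
    exact hxz h1'.symm
  have hfxz' : f x ≠ z := by
    intro h
    have h1' : f.SameCycle x (f x) := sc_apply f x
    rw [h] at h1'
    exact hxz h1'
  -- two-factor property
  have htf : IsTwoFactorPerm G g := by
    constructor
    · intro v
      rcases eq_or_ne v x with rfl | hvx
      · rw [gx]; exact h1
      rcases eq_or_ne v z with rfl | hvz
      · rw [gz]; exact h2
      · rw [gv v hvx hvz]; exact hf.1 v
    · intro v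
      rcases eq_or_ne v x with rfl | hvx
      · rw [gx, gv (f z) hfzx (hfp z)]
        intro h
        have h1' : f.SameCycle z (f (f z)) := (sc_apply f z).trans (sc_apply f (f z))
        rw [h] at h1'
        exact hxz h1'.symm
      rcases eq_or_ne v z with rfl | hvz
      · rw [gz, gv (f x) (hfp x) hfxz']
        intro h
        have h1' : f.SameCycle x (f (f x)) := (sc_apply f x).trans (sc_apply f (f x))
        rw [h] at h1'
        exact hxz h1'
      · rw [gv v hvx hvz]
        rcases eq_or_ne (f v) x with hfv | hfvx
        · rw [hfv, gx]
          intro h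
          have h1' : f.SameCycle z (f z) := sc_apply f z
          rw [h] at h1'
          have h2' : f.SameCycle v (f v) := sc_apply f v
          rw [hfv] at h2'
          exact hxz (h1'.trans h2').symm
        rcases eq_or_ne (f v) z with hfv | hfvz
        · rw [hfv, gz]
          intro h
          have h1' : f.SameCycle x (f x) := sc_apply f x
          rw [h] at h1'
          have h2' : f.SameCycle v (f v) := sc_apply f v
          rw [hfv] at h2'
          exact hxz (h1'.trans h2')
        · rw [gv (f v) hfvx hfvz]
          exact hf.2 v
  have hgfp : ∀ v, g v ≠ v := tf_fpf htf
  -- the chain: x is g-same-cycle with every f-power of z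
  have hchain : ∀ n : ℕ, 1 ≤ n → g.SameCycle x ((f ^ n) z) := by
    intro n hn
    induction n with
    | zero => omega
    | succ k ih =>
      rcases Nat.eq_or_lt_of_le hn with h1' | h2'
      · have : (f ^ (0 + 1)) z = g x := by rw [pow_one, gx]
        rw [← h1', this]
        exact sc_apply g x
      · have hk : 1 ≤ k := by omega
        have ihy := ih hk
        have hstep : (f ^ (k + 1)) z = f ((f ^ k) z) := by rw [pow_succ']; rfl
        have hyx : (f ^ k) z ≠ x := by
          intro h
          have h1' : f.SameCycle z ((f ^ k) z) := ⟨(k : ℤ), by simp [zpow_natCast]⟩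
          rw [h] at h1'
          exact hxz h1'.symm
        rcases eq_or_ne ((f ^ k) z) z with hyz | hyz
        · rw [hstep, hyz, ← gx]
          exact sc_apply g x
        · rw [hstep, ← gv ((f ^ k) z) hyx hyz]
          exact ihy.trans (sc_apply g ((f ^ k) z))
  have hgxz : g.SameCycle x z := by
    have horder : (f ^ orderOf f) z = z := by rw [pow_orderOf_eq_one]; rfl
    exact horder ▸ hchain (orderOf f) (orderOf_pos f)
  -- coarsening: f-same-cycle implies g-same-cycle
  have hcoarse : ∀ p q, f.SameCycle p q → g.SameCycle p q := by
    have haux : ∀ (p : V) (n : ℕ), g.SameCycle p ((f ^ n) p) := by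
      intro p n
      induction n with
      | zero => simpa using Equiv.Perm.SameCycle.refl g p
      | succ k ih =>
        have hstep : (f ^ (k + 1)) p = f ((f ^ k) p) := by rw [pow_succ']; rfl
        rw [hstep]
        rcases eq_or_ne ((f ^ k) p) x with hyx | hyx
        · rw [hyx, ← gz]
          exact ((hyx ▸ ih : g.SameCycle p x).trans hgxz).trans (sc_apply g z)
        rcases eq_or_ne ((f ^ k) p) z with hyz | hyz
        · rw [hyz, ← gx]
          exact ((hyz ▸ ih : g.SameCycle p z).trans hgxz.symm).trans (sc_apply g x)
        · rw [← gv ((f ^ k) p) hyx hyz]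
          exact ih.trans (sc_apply g ((f ^ k) p))
    intro p q hpq
    obtain ⟨n, -, -, hn⟩ := hpq.exists_pow_eq''
    exact hn ▸ haux p n
  refine ⟨htf, ?_⟩
  have : Nonempty V := ⟨x⟩
  rw [card_cycleType_eq hgfp, card_cycleType_eq hfp]
  refine card_image_lt_of_ker f.cycleOf g.cycleOf ?_ (x := x) (z := z) ?_ ?_
  · intro p q hpq
    exact ((cycleOf_eq_iff hgfp p q).2 (hcoarse p q ((cycleOf_eq_iff hfp p q).1 hpq)))
  · exact (cycleOf_eq_iff hgfp x z).2 hgxz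
  · intro h
    exact hxz ((cycleOf_eq_iff hfp x z).1 h)

/-- The permutation obtained from `σ` by reversing the cycle containing `w`. -/
def revOn (σ : Equiv.Perm V) (w : V) : Equiv.Perm V where
  toFun v := if σ.SameCycle w v then σ⁻¹ v else σ v
  invFun v := if σ.SameCycle w v then σ v else σ⁻¹ v
  left_inv v := by
    by_cases h : σ.SameCycle w v
    · have h' : σ.SameCycle w (σ⁻¹ v) := Equiv.Perm.sameCycle_symm_apply_right.2 h
      simp [h, h']
    · have h' : ¬ σ.SameCycle w (σ v) := fun hh => h (Equiv.Perm.sameCycle_apply_right.1 hh)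
      simp [h, h']
  right_inv v := by
    by_cases h : σ.SameCycle w v
    · have h' : σ.SameCycle w (σ v) := Equiv.Perm.sameCycle_apply_right.2 h
      simp [h, h']
    · have h' : ¬ σ.SameCycle w (σ⁻¹ v) := fun hh => h (Equiv.Perm.sameCycle_symm_apply_right.1 hh)
      simp [h, h']

lemma revOn_apply_of_sameCycle {σ : Equiv.Perm V} {w v : V} (h : σ.SameCycle w v) :
    revOn σ w v = σ⁻¹ v := by simp [revOn, h]

lemma revOn_apply_of_not_sameCycle {σ : Equiv.Perm V} {w v : V} (h : ¬ σ.SameCycle w v) :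
    revOn σ w v = σ v := by simp [revOn, h]

lemma revOn_inv_apply (σ : Equiv.Perm V) (w v : V) :
    (revOn σ w)⁻¹ v = if σ.SameCycle w v then σ v else σ⁻¹ v := by
  rfl

lemma revOn_sameCycle_iff (σ : Equiv.Perm V) (w p q : V) :
    (revOn σ w).SameCycle p q ↔ σ.SameCycle p q := by
  constructor
  · refine sameCycle_of_steps (fun y => ?_)
    by_cases h : σ.SameCycle w y
    · exact Or.inr (revOn_apply_of_sameCycle h)
    · exact Or.inl (revOn_apply_of_not_sameCycle h)
  · refine sameCycle_of_steps (fun y => ?_)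
    by_cases h : σ.SameCycle w y
    · right
      rw [revOn_inv_apply, if_pos h]
    · left
      rw [revOn_apply_of_not_sameCycle h]

lemma revOn_twoFactor {G : SimpleGraph V} {σ : Equiv.Perm V} (hσ : IsTwoFactorPerm G σ)
    (w : V) : IsTwoFactorPerm G (revOn σ w) := by
  constructor
  · intro v
    by_cases h : σ.SameCycle w v
    · rw [revOn_apply_of_sameCycle h]
      have := hσ.1 (σ⁻¹ v)
      rw [show σ (σ⁻¹ v) = v from σ.apply_symm_apply v] at this
      exact this.symm
    · rw [revOn_apply_of_not_sameCycle h]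
      exact hσ.1 v
  · intro v
    by_cases h : σ.SameCycle w v
    · have h' : σ.SameCycle w (σ⁻¹ v) := Equiv.Perm.sameCycle_symm_apply_right.2 h
      rw [revOn_apply_of_sameCycle h, revOn_apply_of_sameCycle h']
      intro heq
      have heq2 : σ (σ v) = v := by
        have := congrArg σ (congrArg σ heq)
        simpa using this.symm
      exact hσ.2 v heq2
    · have h' : ¬ σ.SameCycle w (σ v) := fun hh => h (Equiv.Perm.sameCycle_apply_right.1 hh)
      rw [revOn_apply_of_not_sameCycle h, revOn_apply_of_not_sameCycle h']
      exact hσ.2 v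

lemma revOn_card_cycleType {G : SimpleGraph V} {σ : Equiv.Perm V} (hσ : IsTwoFactorPerm G σ)
    (w : V) : Multiset.card (revOn σ w).cycleType = Multiset.card σ.cycleType := by
  have : Nonempty V := ⟨w⟩
  have hfp : ∀ v, σ v ≠ v := tf_fpf hσ
  have hfp' : ∀ v, revOn σ w v ≠ v := tf_fpf (revOn_twoFactor hσ w)
  rw [card_cycleType_eq hfp, card_cycleType_eq hfp']
  apply le_antisymm
  · refine card_image_le_of_ker σ.cycleOf (revOn σ w).cycleOf (fun p q hpq => ?_)
    exact (cycleOf_eq_iff hfp' p q).2 ((revOn_sameCycle_iff σ w p q).2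
      ((cycleOf_eq_iff hfp p q).1 hpq))
  · refine card_image_le_of_ker (revOn σ w).cycleOf σ.cycleOf (fun p q hpq => ?_)
    exact (cycleOf_eq_iff hfp p q).2 ((revOn_sameCycle_iff σ w p q).1
      ((cycleOf_eq_iff hfp' p q).1 hpq))

end Helpers

/-- If `G` is a connected non-hamiltonian s-quadrangular graph of maximum
degree at most 4 and `σ` is a 2-factor of `G` with the minimum number `m ≥ 2`
of cycles, then every vertex having a neighbor outside its own cycle has
degree exactly 4. -/
theorem min_two_factor_outside_neighbor_degree_four {V : Type*} [Fintype V]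
    [DecidableEq V] (G : SimpleGraph V) (hconn : G.Connected) (hsq : SQuadG G)
    (hdeg : ∀ v : V, (G.neighborSet v).ncard ≤ 4) (hham : ¬ G.IsHamiltonian)
    (σ : Equiv.Perm V) (hσ : IsTwoFactorPerm G σ)
    (hmin : ∀ τ : Equiv.Perm V, IsTwoFactorPerm G τ →
      Multiset.card σ.cycleType ≤ Multiset.card τ.cycleType)
    (hm : 2 ≤ Multiset.card σ.cycleType) :
    ∀ u : V, (∃ w : V, ¬ σ.SameCycle u w ∧ G.Adj u w) →
      (G.neighborSet u).ncard = 4 := by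
  rintro u ⟨w, hsc, hadj⟩
  by_contra hne4
  have hle3 : (G.neighborSet u).ncard ≤ 3 := by
    have := hdeg u
    omega
  set a : V := σ⁻¹ u with ha
  set b : V := σ u with hb
  set d : V := σ w with hd
  have hσau : σ a = u := by rw [ha]; exact σ.apply_symm_apply u
  have hscau : σ.SameCycle a u := hσau ▸ sc_apply σ a
  have hscub : σ.SameCycle u b := sc_apply σ u
  have hscwd : σ.SameCycle w d := sc_apply σ w
  have hab : a ≠ b := by
    intro h
    apply hσ.2 u
    have : σ a = σ b := congrArg σ h
    rw [hσau] at this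
    rw [hb] at this
    exact this.symm
  have hwa : w ≠ a := by
    intro h
    exact hsc ((h ▸ hscau : σ.SameCycle w u).symm)
  have hwb : w ≠ b := by
    intro h
    exact hsc (h ▸ hscub)
  have hadj_ua : G.Adj u a := by
    have := hσ.1 a
    rw [hσau] at this
    exact this.symm
  have hadj_ub : G.Adj u b := hσ.1 u
  have hsub : ({a, b, w} : Set V) ⊆ G.neighborSet u := by
    intro v hv
    rcases hv with rfl | rfl | rfl
    · exact hadj_ua
    · exact hadj_ub
    · exact hadj
  have hcard3 : ({a, b, w} : Set V).ncard = 3 := by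
    rw [Set.ncard_insert_of_notMem (by simp [hab, hwa.symm]), Set.ncard_pair (hwb.symm ∘ Eq.symm ∘ Eq.symm)]
  have hNeq : G.neighborSet u = {a, b, w} :=
    (Set.eq_of_subset_of_ncard_le hsub (by rw [hcard3]; exact hle3)).symm
  -- apply s-quadrangularity to {u, d}
  have hud : u ≠ d := by
    intro h
    exact hsc ((h ▸ hscwd : σ.SameCycle w u).symm)
  have hadj_dw : G.Adj d w := by
    have := hσ.1 w
    rw [← hd] at this
    exact this.symm
  have hS2 : ({u, d} : Set V).ncard = 2 := Set.ncard_pair hud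
  have hquad := hsq {u, d} (by rw [hS2]) ?_
  swap
  · intro p hp
    rcases hp with rfl | rfl
    · exact ⟨d, by simp, hud.symm, ⟨w, hadj, hadj_dw⟩⟩
    · exact ⟨u, by simp, hud, ⟨w, hadj_dw, hadj⟩⟩
  rw [hS2] at hquad
  obtain ⟨zz, hz_mem, hzw⟩ := Set.exists_ne_of_one_lt_ncard (s := commonUnionG G {u, d}) (by omega) w
  have hz : G.Adj u zz ∧ G.Adj d zz := by
    obtain ⟨p, hp, q, hq, hpq, hp1, hq1⟩ := hz_mem
    rcases hp with rfl | rfl <;> rcases hq with rfl | rfl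
    · exact absurd rfl hpq
    · exact ⟨hp1, hq1⟩
    · exact ⟨hq1, hp1⟩
    · exact absurd rfl hpq
  have hz_in : zz ∈ G.neighborSet u := hz.1
  rw [hNeq] at hz_in
  rcases hz_in with rfl | rfl | rfl
  -- case zz = a : merge σ directly with swap w a
  · have hxz : ¬ σ.SameCycle w a := by
      intro h
      exact hsc (h.trans hscau).symm
    have h1 : G.Adj w (σ a) := by rw [hσau]; exact hadj.symm
    have h2 : G.Adj a (σ w) := by rw [← hd]; exact hz.2.symm
    obtain ⟨htf, hlt⟩ := merge_lemma hσ hxz h1 h2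
    exact absurd (hmin _ htf) (not_le.2 hlt)
  -- case zz = b : reverse the cycle of w, then merge with swap u d
  · set σ' := revOn σ w with hσ'
    have htf' : IsTwoFactorPerm G σ' := revOn_twoFactor hσ w
    have hxz : ¬ σ'.SameCycle u d := by
      rw [hσ', revOn_sameCycle_iff]
      intro h
      exact hsc (h.trans hscwd.symm)
    have hσ'd : σ' d = w := by
      rw [hσ', revOn_apply_of_sameCycle hscwd, hd]
      exact σ.symm_apply_apply w
    have hσ'u : σ' u = b := by
      rw [hσ', revOn_apply_of_not_sameCycle (fun h => hsc h.symm)]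
    have h1 : G.Adj u (σ' d) := by rw [hσ'd]; exact hadj
    have h2 : G.Adj d (σ' u) := by rw [hσ'u]; exact hz.2
    obtain ⟨htf2, hlt⟩ := merge_lemma htf' hxz h1 h2
    rw [revOn_card_cycleType hσ w] at hlt
    exact absurd (hmin _ htf2) (not_le.2 hlt)
  -- case zz = w : contradiction with zz ≠ w
  · exact hzw rfl
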